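/- Generalisation of stable models: for every extended program P, the extended WS-models and the extended RD-models of the singleton dynamic logic program ⟨P⟩ are exactly the stable models of P, i.e. WS'(⟨P⟩) = RD'(⟨P⟩) = SM(P). -/

import Mathlib

namespace RuleUpdates

/-- Objective literal: an atom (a natural number) or its strong negation. -/
inductive OLit where
  | pos : ℕ → OLit
  | neg : ℕ → OLit
deriving DecidableEq

/-- Strong negation on objective literals (with ¬¬p identified with p). -/
def OLit.compl : OLit → OLit
  | .pos p => .neg p
  | .neg p => .pos p

/-- Literal: an objective literal or its default negation (not not l = l). -/
inductive Lit where
  | obj : OLit → Lit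
  | ndef : OLit → Lit
deriving DecidableEq

/-- Extended rule: a head literal and a finite set of body literals. -/
structure Rule where
  head : Lit
  body : Finset Lit

/-- Interpretation: a consistent set of objective literals. -/
def Interp (J : Set OLit) : Prop :=
  ∀ p : ℕ, ¬ (OLit.pos p ∈ J ∧ OLit.neg p ∈ J)

/-- Satisfaction of a literal. -/
def satLit (J : Set OLit) : Lit → Prop
  | .obj l => l ∈ J
  | .ndef l => l ∉ J

/-- Satisfaction of a set of body literals. -/
def satBody (J : Set OLit) (B : Finset Lit) : Prop :=
  ∀ L ∈ B, satLit J L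

/-- Satisfaction of a rule. -/
def satRule (J : Set OLit) (π : Rule) : Prop :=
  satBody J π.body → satLit J π.head

/-- J is a model of a program. -/
def isModel (J : Set OLit) (P : Set Rule) : Prop :=
  ∀ π ∈ P, satRule J π

/-- J* = J ∪ { not l | l ∈ ℒ ∖ J }, as a set of literals. -/
def star (J : Set OLit) : Set Lit :=
  {L | ∃ l : OLit, (L = Lit.obj l ∧ l ∈ J) ∨ (L = Lit.ndef l ∧ l ∉ J)}

/-- def(J) = { (not l.) | l ∈ ℒ ∖ J }. -/
def defFacts (J : Set OLit) : Set Rule :=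
  {π | ∃ l : OLit, l ∉ J ∧ π = ⟨Lit.ndef l, ∅⟩}

/-- S (a set of literals) is closed under program P, all literals
treated as distinct propositional atoms. -/
def closedUnder (P : Set Rule) (S : Set Lit) : Prop :=
  ∀ π ∈ P, (π.body : Set Lit) ⊆ S → π.head ∈ S

/-- least(P): the least model of P when all literals are treated as
distinct propositional atoms. -/
def leastModel (P : Set Rule) : Set Lit :=
  ⋂₀ {S | closedUnder P S}

/-- Stable model of an extended program: J* = least(P ∪ def(J)). -/
def isStableModel (P : Set Rule) (J : Set OLit) : Prop :=
  Interp J ∧ star J = leastModel (P ∪ defFacts J)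

/-- Level of a literal, with ℓ(not l) = ℓ(l). -/
def litLevel (ℓ : OLit → ℕ) : Lit → ℕ
  | .obj l => ℓ l
  | .ndef l => ℓ l

/-- ℓ↑(S): the maximal level of a literal in the finite set S. -/
def supLevel (ℓ : OLit → ℕ) (S : Finset Lit) : ℕ :=
  S.sup (litLevel ℓ)

/-- ℓ↓(S): the minimal level of a literal in the finite set S. -/
noncomputable def infLevel (ℓ : OLit → ℕ) (S : Finset Lit) : ℕ :=
  sInf (litLevel ℓ '' (S : Set Lit))

/-- Well-supported model of an extended program w.r.t. a level mapping ℓ. -/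
def isWSModelWith (P : Set Rule) (J : Set OLit) (ℓ : OLit → ℕ) : Prop :=
  isModel J P ∧
    ∀ l ∈ J, ∃ π ∈ P, π.head = Lit.obj l ∧ satBody J π.body ∧
      supLevel ℓ π.body < ℓ l

/-- Well-supported model of an extended program. -/
def isWSModel (P : Set Rule) (J : Set OLit) : Prop :=
  Interp J ∧ ∃ ℓ : OLit → ℕ, isWSModelWith P J ℓ

/-- con(L): the literals in conflict with L. -/
def con : Lit → Finset Lit
  | .obj l => {Lit.ndef l, Lit.obj l.compl}
  | .ndef l => {Lit.obj l}

/-- ρ(P): all rules occurring in the components of the DLP. -/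
def allRules {n : ℕ} (P : Fin n → Set Rule) : Set Rule :=
  {π | ∃ i : Fin n, π ∈ P i}

/-- The rule π ∈ P i is rejected w.r.t. the set of literals S:
some later σ with conflicting head has its body included in S. -/
def rejIn {n : ℕ} (P : Fin n → Set Rule) (S : Set Lit) (i : Fin n) (π : Rule) : Prop :=
  ∃ j : Fin n, i < j ∧ ∃ σ ∈ P j, σ.head ∈ con π.head ∧ (σ.body : Set Lit) ⊆ S

/-- rem(P, S) = ρ(P) ∖ rej(P, S), as a set of component-indexed rules. -/
def remSet {n : ℕ} (P : Fin n → Set Rule) (S : Set Lit) : Set (Fin n × Rule) :=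
  {x | x.2 ∈ P x.1 ∧ ¬ rejIn P S x.1 x.2}

/-- The operator T_{P,J}. -/
def TOp {n : ℕ} (P : Fin n → Set Rule) (J : Set OLit) (S : Set Lit) : Set Lit :=
  {L | ((∃ x ∈ remSet P (star J), x.2.head = L ∧ (x.2.body : Set Lit) ⊆ S) ∨
        (∃ l : OLit, l ∉ J ∧ L = Lit.ndef l)) ∧
       ¬ ∃ σ ∈ remSet P S, σ.2.head ∈ con L ∧ (σ.2.body : Set Lit) ⊆ star J}

/-- Iterates of T_{P,J} starting from ∅. -/
def TIter {n : ℕ} (P : Fin n → Set Rule) (J : Set OLit) : ℕ → Set Lit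
  | 0 => ∅
  | k + 1 => TOp P J (TIter P J k)

/-- Extended RD-model of a DLP: J* = ⋃_{k≥0} T_{P,J}^k(∅). -/
def isExtRD {n : ℕ} (P : Fin n → Set Rule) (J : Set OLit) : Prop :=
  Interp J ∧ star J = ⋃ k : ℕ, TIter P J k

/-- rej^ℓ(P, J): π ∈ P i is rejected w.r.t. J and the level mapping ℓ. -/
def rejLvl {n : ℕ} (P : Fin n → Set Rule) (J : Set OLit) (ℓ : OLit → ℕ)
    (i : Fin n) (π : Rule) : Prop :=
  ∃ j : Fin n, i < j ∧ ∃ σ ∈ P j, σ.head ∈ con π.head ∧ satBody J σ.body ∧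
    supLevel ℓ σ.body < infLevel ℓ (con π.head)

/-- Extended WS-model of a DLP. -/
def isExtWS {n : ℕ} (P : Fin n → Set Rule) (J : Set OLit) : Prop :=
  Interp J ∧ ∃ ℓ : OLit → ℕ,
    (∀ i : Fin n, ∀ π ∈ P i, ¬ rejLvl P J ℓ i π → satRule J π) ∧
    (∀ l ∈ J, ∃ x ∈ remSet P (star J), x.2.head = Lit.obj l ∧ satBody J x.2.body ∧
      supLevel ℓ x.2.body < ℓ l)

/-- A program is acyclic w.r.t. a level mapping ℓ. -/
def acyclicWrt (Q : Set Rule) (ℓ : OLit → ℕ) : Prop :=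
  (∀ l : OLit, ℓ l = ℓ l.compl) ∧ ∀ π ∈ Q, supLevel ℓ π.body < litLevel ℓ π.head

/-! ### Auxiliary lemmas -/

lemma mem_star_obj {J : Set OLit} {l : OLit} : Lit.obj l ∈ star J ↔ l ∈ J := by
  constructor
  · rintro ⟨m, (⟨h1, h2⟩ | ⟨h1, h2⟩)⟩
    · cases h1; exact h2
    · exact Lit.noConfusion h1
  · exact fun h => ⟨l, Or.inl ⟨rfl, h⟩⟩

lemma mem_star_ndef {J : Set OLit} {l : OLit} : Lit.ndef l ∈ star J ↔ l ∉ J := by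
  constructor
  · rintro ⟨m, (⟨h1, h2⟩ | ⟨h1, h2⟩)⟩
    · exact Lit.noConfusion h1
    · cases h1; exact h2
  · exact fun h => ⟨l, Or.inr ⟨rfl, h⟩⟩

lemma satLit_iff {J : Set OLit} : ∀ {L : Lit}, satLit J L ↔ L ∈ star J
  | .obj l => by simp [satLit, mem_star_obj]
  | .ndef l => by simp [satLit, mem_star_ndef]

lemma satBody_iff {J : Set OLit} {B : Finset Lit} :
    satBody J B ↔ (B : Set Lit) ⊆ star J := by
  constructor
  · intro h L hL
    exact satLit_iff.mp (h L (Finset.mem_coe.mp hL))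
  · intro h L hL
    exact satLit_iff.mpr (h (Finset.mem_coe.mpr hL))

lemma closedUnder_leastModel (Q : Set Rule) : closedUnder Q (leastModel Q) := by
  intro π hπ hb
  intro S hS
  exact hS π hπ (hb.trans (Set.sInter_subset_of_mem hS))

lemma leastModel_subset {Q : Set Rule} {S : Set Lit} (h : closedUnder Q S) :
    leastModel Q ⊆ S :=
  Set.sInter_subset_of_mem h

/-- Immediate consequence operator (all literals as atoms). -/
def FOp (Q : Set Rule) (S : Set Lit) : Set Lit :=
  {L | ∃ π ∈ Q, π.head = L ∧ (π.body : Set Lit) ⊆ S}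

/-- Iterates of the immediate consequence operator. -/
def FIter (Q : Set Rule) : ℕ → Set Lit
  | 0 => ∅
  | k + 1 => FOp Q (FIter Q k)

lemma FIter_mono (Q : Set Rule) : Monotone (FIter Q) := by
  apply monotone_nat_of_le_succ
  intro k
  induction k with
  | zero => simp [FIter]
  | succ k ih =>
    rintro L ⟨π, hπ, hh, hb⟩
    exact ⟨π, hπ, hh, hb.trans ih⟩

lemma FIter_subset_leastModel (Q : Set Rule) (k : ℕ) :
    FIter Q k ⊆ leastModel Q := by
  induction k with
  | zero => simp [FIter]
  | succ k ih =>
    rintro L ⟨π, hπ, hh, hb⟩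
    exact hh ▸ closedUnder_leastModel Q π hπ (hb.trans ih)

lemma leastModel_eq_iUnion (Q : Set Rule) : leastModel Q = ⋃ k, FIter Q k := by
  classical
  apply subset_antisymm
  · apply leastModel_subset
    intro π hπ hb
    have hall : ∀ L ∈ π.body, ∃ k, L ∈ FIter Q k := by
      intro L hL
      simpa [Set.mem_iUnion] using hb (Finset.mem_coe.mpr hL)
    set g : Lit → ℕ := fun L => if h : ∃ k, L ∈ FIter Q k then h.choose else 0 with hg
    have hgmem : ∀ L ∈ π.body, L ∈ FIter Q (g L) := by
      intro L hL
      have h := hall L hL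
      simp only [hg, dif_pos h]
      exact h.choose_spec
    have hsub : (π.body : Set Lit) ⊆ FIter Q (π.body.sup g) := by
      intro L hL
      have hL' : L ∈ π.body := Finset.mem_coe.mp hL
      exact FIter_mono Q (Finset.le_sup hL') (hgmem L hL')
    exact Set.mem_iUnion.mpr ⟨π.body.sup g + 1, π, hπ, rfl, hsub⟩
  · exact Set.iUnion_subset (FIter_subset_leastModel Q)

lemma interp_not_both {J : Set OLit} {l : OLit} (hJ : Interp J) (h : l ∈ J) :
    l.compl ∉ J := by
  cases l with
  | pos p => exact fun hc => hJ p ⟨h, hc⟩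
  | neg p => exact fun hc => hJ p ⟨hc, h⟩

lemma not_rejIn (P : Fin 1 → Set Rule) (S : Set Lit) (i : Fin 1) (π : Rule) :
    ¬ rejIn P S i π := by
  rintro ⟨j, hij, -⟩
  rw [Fin.lt_def] at hij
  have h1 := i.isLt
  have h2 := j.isLt
  omega

lemma not_rejLvl (P : Fin 1 → Set Rule) (J : Set OLit) (ℓ : OLit → ℕ)
    (i : Fin 1) (π : Rule) : ¬ rejLvl P J ℓ i π := by
  rintro ⟨j, hij, -⟩
  rw [Fin.lt_def] at hij
  have h1 := i.isLt
  have h2 := j.isLt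
  omega

lemma mem_remSet_one {P : Set Rule} {S : Set Lit} {x : Fin 1 × Rule} :
    x ∈ remSet (fun _ : Fin 1 => P) S ↔ x.2 ∈ P :=
  ⟨fun h => h.1, fun h => ⟨h, not_rejIn _ _ _ _⟩⟩

lemma no_block {P : Set Rule} {J : Set OLit} (hJ : Interp J) (hm : isModel J P)
    (S₀ : Set Lit) {L : Lit} (hL : L ∈ star J) :
    ¬ ∃ σ ∈ remSet (fun _ : Fin 1 => P) S₀, σ.2.head ∈ con L ∧
      (σ.2.body : Set Lit) ⊆ star J := by
  rintro ⟨σ, hσ, hcon, hbody⟩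
  have hσP : σ.2 ∈ P := mem_remSet_one.mp hσ
  have hsat : satLit J σ.2.head := hm σ.2 hσP (satBody_iff.mpr hbody)
  cases L with
  | obj l =>
    have hl : l ∈ J := mem_star_obj.mp hL
    simp only [con, Finset.mem_insert, Finset.mem_singleton] at hcon
    cases hcon with
    | inl h => rw [h] at hsat; exact hsat hl
    | inr h => rw [h] at hsat; exact interp_not_both hJ hl hsat
  | ndef l =>
    have hl : l ∉ J := mem_star_ndef.mp hL
    simp only [con, Finset.mem_singleton] at hcon
    rw [hcon] at hsat
    exact hl hsat

lemma isModel_of_stable {P : Set Rule} {J : Set OLit} (h : isStableModel P J) :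
    isModel J P := by
  intro π hπ hb
  have hb' : (π.body : Set Lit) ⊆ star J := satBody_iff.mp hb
  have hhead : π.head ∈ star J := by
    rw [h.2]
    exact closedUnder_leastModel _ π (Or.inl hπ) (by rw [← h.2]; exact hb')
  exact satLit_iff.mpr hhead

lemma stable_of_ws {P : Set Rule} {J : Set OLit} {ℓ : OLit → ℕ}
    (hJ : Interp J) (hm : isModel J P)
    (hsupp : ∀ l ∈ J, ∃ π ∈ P, π.head = Lit.obj l ∧ satBody J π.body ∧
      supLevel ℓ π.body < ℓ l) :
    isStableModel P J := by
  refine ⟨hJ, subset_antisymm ?_ ?_⟩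
  · -- star J ⊆ leastModel
    have hnd : ∀ l ∉ J, Lit.ndef l ∈ leastModel (P ∪ defFacts J) := fun l hl =>
      closedUnder_leastModel _ ⟨Lit.ndef l, ∅⟩ (Or.inr ⟨l, hl, rfl⟩) (by simp)
    have key : ∀ n : ℕ, ∀ l ∈ J, ℓ l ≤ n → Lit.obj l ∈ leastModel (P ∪ defFacts J) := by
      intro n
      induction n using Nat.strong_induction_on with
      | _ n ih =>
        intro l hl hln
        obtain ⟨π, hπ, hh, hsb, hlt⟩ := hsupp l hl
        refine hh ▸ closedUnder_leastModel _ π (Or.inl hπ) ?_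
        intro L hL
        have hLb : L ∈ π.body := Finset.mem_coe.mp hL
        have hsat := hsb L hLb
        cases L with
        | ndef m => exact hnd m hsat
        | obj m =>
          have hlev : ℓ m ≤ supLevel ℓ π.body := Finset.le_sup (f := litLevel ℓ) hLb
          exact ih (supLevel ℓ π.body) (lt_of_lt_of_le hlt hln) m hsat hlev
    rintro L ⟨l, (⟨rfl, hl⟩ | ⟨rfl, hl⟩)⟩
    · exact key (ℓ l) l hl le_rfl
    · exact hnd l hl
  · apply leastModel_subset
    intro π hπ hb
    cases hπ with
    | inl hP => exact satLit_iff.mp (hm π hP (satBody_iff.mpr hb))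
    | inr hd =>
      obtain ⟨l, hl, rfl⟩ := hd
      exact mem_star_ndef.mpr hl

lemma ws_of_stable {P : Set Rule} {J : Set OLit} (h : isStableModel P J) :
    ∃ ℓ : OLit → ℕ, ∀ l ∈ J, ∃ π ∈ P, π.head = Lit.obj l ∧ satBody J π.body ∧
      supLevel ℓ π.body < ℓ l := by
  classical
  set Q := P ∪ defFacts J with hQ
  have hstar : star J = ⋃ k, FIter Q k := h.2.trans (leastModel_eq_iUnion Q)
  refine ⟨fun l => sInf {k | Lit.obj l ∈ FIter Q k}, ?_⟩
  intro l hl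
  have hmem : Lit.obj l ∈ ⋃ k, FIter Q k := hstar ▸ mem_star_obj.mpr hl
  have hne : {k | Lit.obj l ∈ FIter Q k}.Nonempty := by
    simpa [Set.mem_iUnion, Set.Nonempty] using hmem
  have hsInf := Nat.sInf_mem hne
  set N := sInf {k | Lit.obj l ∈ FIter Q k} with hN
  have hN0 : N ≠ 0 := by
    intro h0
    rw [Set.mem_setOf_eq, h0] at hsInf
    simp [FIter] at hsInf
  obtain ⟨k, hk⟩ := Nat.exists_eq_succ_of_ne_zero hN0
  rw [Set.mem_setOf_eq, hk] at hsInf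
  obtain ⟨π, hπQ, hh, hb⟩ := hsInf
  have hπP : π ∈ P := by
    cases hπQ with
    | inl h' => exact h'
    | inr h' =>
      obtain ⟨m, hm, rfl⟩ := h'
      exact Lit.noConfusion hh
  have hbstar : (π.body : Set Lit) ⊆ star J := by
    intro L hL
    rw [hstar]
    exact Set.mem_iUnion.mpr ⟨k, hb hL⟩
  refine ⟨π, hπP, hh, satBody_iff.mpr hbstar, ?_⟩
  show supLevel _ π.body < sInf {k | Lit.obj l ∈ FIter Q k}
  rw [← hN, hk]
  refine (Finset.sup_lt_iff (by exact Nat.succ_pos k)).mpr ?_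
  intro L hL
  have hLk : L ∈ FIter Q k := hb (Finset.mem_coe.mpr hL)
  cases L with
  | obj m =>
    have : sInf {k' | Lit.obj m ∈ FIter Q k'} ≤ k := Nat.sInf_le hLk
    simpa [litLevel] using Nat.lt_succ_of_le this
  | ndef m =>
    have hmJ : m ∉ J := by
      have : Lit.ndef m ∈ star J := by
        rw [hstar]; exact Set.mem_iUnion.mpr ⟨k, hLk⟩
      exact mem_star_ndef.mp this
    have hempty : {k' | Lit.obj m ∈ FIter Q k'} = ∅ := by
      ext k'
      simp only [Set.mem_setOf_eq, Set.mem_empty_iff_false, iff_false]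
      intro hk'
      have : Lit.obj m ∈ star J := by
        rw [hstar]; exact Set.mem_iUnion.mpr ⟨k', hk'⟩
      exact hmJ (mem_star_obj.mp this)
    simp [litLevel, hempty]

lemma rd_of_stable {P : Set Rule} {J : Set OLit} (h : isStableModel P J) :
    isExtRD (fun _ : Fin 1 => P) J := by
  have hJ := h.1
  have hm := isModel_of_stable h
  set Q := P ∪ defFacts J with hQ
  have hstar : star J = ⋃ k, FIter Q k := h.2.trans (leastModel_eq_iUnion Q)
  refine ⟨hJ, subset_antisymm ?_ ?_⟩
  · -- star J ⊆ ⋃ TIter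
    have key : ∀ k, FIter Q k ⊆ TIter (fun _ : Fin 1 => P) J k := by
      intro k
      induction k with
      | zero => simp [FIter]
      | succ k ih =>
        rintro L hL
        obtain ⟨π, hπQ, hh, hb⟩ := hL
        have hLstar : L ∈ star J := by
          rw [hstar]
          exact Set.mem_iUnion.mpr ⟨k + 1, π, hπQ, hh, hb⟩
        refine ⟨?_, no_block hJ hm _ hLstar⟩
        cases hπQ with
        | inl hP =>
          exact Or.inl ⟨((0 : Fin 1), π), mem_remSet_one.mpr hP, hh, hb.trans ih⟩
        | inr hd =>
          obtain ⟨l, hl, rfl⟩ := hd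
          exact Or.inr ⟨l, hl, hh.symm⟩
    rw [hstar]
    exact Set.iUnion_mono key
  · -- ⋃ TIter ⊆ star J
    apply Set.iUnion_subset
    intro k
    induction k with
    | zero => simp [TIter]
    | succ k ih =>
      rintro L ⟨hpos, -⟩
      cases hpos with
      | inl h' =>
        obtain ⟨x, hx, hh, hb⟩ := h'
        have hxP : x.2 ∈ P := mem_remSet_one.mp hx
        rw [h.2]
        exact hh ▸ closedUnder_leastModel _ x.2 (Or.inl hxP)
          (by rw [← h.2]; exact hb.trans ih)
      | inr h' =>
        obtain ⟨l, hl, rfl⟩ := h'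
        exact mem_star_ndef.mpr hl

lemma stable_of_rd {P : Set Rule} {J : Set OLit}
    (h : isExtRD (fun _ : Fin 1 => P) J) : isStableModel P J := by
  obtain ⟨hJ, hU⟩ := h
  refine ⟨hJ, subset_antisymm ?_ ?_⟩
  · -- star J ⊆ leastModel
    rw [hU]
    apply Set.iUnion_subset
    intro k
    induction k with
    | zero => simp [TIter]
    | succ k ih =>
      rintro L ⟨hpos, -⟩
      cases hpos with
      | inl h' =>
        obtain ⟨x, hx, hh, hb⟩ := h'
        have hxP : x.2 ∈ P := mem_remSet_one.mp hx
        exact hh ▸ closedUnder_leastModel _ x.2 (Or.inl hxP) (hb.trans ih)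
      | inr h' =>
        obtain ⟨l, hl, rfl⟩ := h'
        exact closedUnder_leastModel _ ⟨Lit.ndef l, ∅⟩ (Or.inr ⟨l, hl, rfl⟩) (by simp)
  · -- leastModel ⊆ star J
    apply leastModel_subset
    intro π hπ hb
    cases hπ with
    | inr hd =>
      obtain ⟨l, hl, rfl⟩ := hd
      exact mem_star_ndef.mpr hl
    | inl hP =>
      by_contra hhead
      cases hhd : π.head with
      | obj l =>
        have hl : l ∉ J := fun h' => hhead (hhd ▸ mem_star_obj.mpr h')
        have hmem : Lit.ndef l ∈ ⋃ k, TIter (fun _ : Fin 1 => P) J k :=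
          hU ▸ mem_star_ndef.mpr hl
        obtain ⟨k, hk⟩ := Set.mem_iUnion.mp hmem
        cases k with
        | zero => simp [TIter] at hk
        | succ k =>
          obtain ⟨-, hblock⟩ := hk
          exact hblock ⟨((0 : Fin 1), π), mem_remSet_one.mpr hP,
            by simp [con, hhd], hb⟩
      | ndef l =>
        have hl : l ∈ J := by
          by_contra h'
          exact hhead (hhd ▸ mem_star_ndef.mpr h')
        have hmem : Lit.obj l ∈ ⋃ k, TIter (fun _ : Fin 1 => P) J k :=
          hU ▸ mem_star_obj.mpr hl
        obtain ⟨k, hk⟩ := Set.mem_iUnion.mp hmem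
        cases k with
        | zero => simp [TIter] at hk
        | succ k =>
          obtain ⟨-, hblock⟩ := hk
          exact hblock ⟨((0 : Fin 1), π), mem_remSet_one.mpr hP,
            by simp [con, hhd], hb⟩

/-- generalisation of stable models:
WS'(⟨P⟩) = RD'(⟨P⟩) = SM(P). -/
theorem generalisation_of_stable_models (P : Set Rule) :
    {J : Set OLit | isExtWS (fun _ : Fin 1 => P) J} = {J : Set OLit | isStableModel P J} ∧
    {J : Set OLit | isExtRD (fun _ : Fin 1 => P) J} = {J : Set OLit | isStableModel P J} := by
  constructor
  · ext J
    simp only [Set.mem_setOf_eq]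
    constructor
    · rintro ⟨hJ, ℓ, h1, h2⟩
      have hm : isModel J P := fun π hπ => h1 0 π hπ (not_rejLvl _ _ _ _ _)
      refine stable_of_ws (ℓ := ℓ) hJ hm ?_
      intro l hl
      obtain ⟨x, hx, hh, hsb, hlt⟩ := h2 l hl
      exact ⟨x.2, mem_remSet_one.mp hx, hh, hsb, hlt⟩
    · intro h
      obtain ⟨ℓ, hsupp⟩ := ws_of_stable h
      refine ⟨h.1, ℓ, fun i π hπ _ => isModel_of_stable h π hπ, ?_⟩
      intro l hl
      obtain ⟨π, hπ, hh, hsb, hlt⟩ := hsupp l hl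
      exact ⟨((0 : Fin 1), π), mem_remSet_one.mpr hπ, hh, hsb, hlt⟩
  · ext J
    simp only [Set.mem_setOf_eq]
    exact ⟨stable_of_rd, rd_of_stable⟩

end RuleUpdates
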